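/- For every type A, the type Seq A of monotone sequences over A is equivalent (in bijection) with the delay type D A, the final coalgebra of the functor X ↦ A ⊕ X. -/

import Mathlib

universe u

/-- Monotone sequences over `A`: functions `ℕ → Option A` that, at each step, either stay
the same or go from `none` to a defined value. -/
def MonSeq (A : Type u) : Type u :=
  {g : ℕ → Option A // ∀ n : ℕ, g n = g (n + 1) ∨ (g n = none ∧ g (n + 1) ≠ none)}

/-- The polynomial functor `X ↦ A ⊕ X`: the head `Sum.inl a` has no children, the head
`Sum.inr _` has exactly one child. -/
def delayPFunctor (A : Type u) : PFunctor.{u} :=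
  ⟨A ⊕ PUnit, fun x => Sum.elim (fun _ => PEmpty) (fun _ => PUnit) x⟩

/-- The delay type `D A`, the final coalgebra (M-type) of `X ↦ A ⊕ X`. -/
def Delay (A : Type u) : Type u := (delayPFunctor A).M

namespace MonSeqDelay
variable {A : Type u}
def step (g : ℕ → Option A) : (delayPFunctor A) (ℕ → Option A) :=
  match g 0 with
  | some a => ⟨Sum.inl a, PEmpty.elim⟩
  | none => ⟨Sum.inr PUnit.unit, fun _ n => g (n + 1)⟩
def toDelay (g : ℕ → Option A) : Delay A := PFunctor.M.corec step g
def hd (d : Delay A) : Option A :=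
  match PFunctor.M.dest d with
  | ⟨Sum.inl a, _⟩ => some a
  | ⟨Sum.inr _, _⟩ => none
def pred (d : Delay A) : Delay A :=
  match PFunctor.M.dest d with
  | ⟨Sum.inl _, _⟩ => d
  | ⟨Sum.inr _, f⟩ => f PUnit.unit
lemma dest_toDelay_some {g : ℕ → Option A} {a : A} (h : g 0 = some a) :
    PFunctor.M.dest (toDelay g) = ⟨Sum.inl a, fun e => PEmpty.elim e⟩ := by
  rw [toDelay, PFunctor.M.dest_corec]
  simp only [step, h, PFunctor.map]
  congr 1
  funext e; exact e.elim
lemma dest_toDelay_none {g : ℕ → Option A} (h : g 0 = none) :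
    PFunctor.M.dest (toDelay g) =
      ⟨Sum.inr PUnit.unit, fun _ => toDelay (fun n => g (n + 1))⟩ := by
  rw [toDelay, PFunctor.M.dest_corec]
  simp only [step, h, PFunctor.map]
  rfl

lemma hd_eq_some {d : Delay A} {a f} (h : PFunctor.M.dest d = ⟨Sum.inl a, f⟩) :
    hd d = some a := by
  simp only [hd, h]
lemma hd_eq_none {d : Delay A} {u f} (h : PFunctor.M.dest d = ⟨Sum.inr u, f⟩) :
    hd d = none := by
  simp only [hd, h]
lemma pred_eq_self {d : Delay A} {a f} (h : PFunctor.M.dest d = ⟨Sum.inl a, f⟩) :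
    pred d = d := by
  simp only [pred, h]
lemma pred_eq_child {d : Delay A} {u} {f} (h : PFunctor.M.dest d = ⟨Sum.inr u, f⟩) :
    pred d = f PUnit.unit := by
  simp only [pred, h]
  rfl

lemma pred_of_hd_some {d : Delay A} {a : A} (h : hd d = some a) : pred d = d := by
  rcases hx : PFunctor.M.dest d with ⟨s, f⟩
  cases s with
  | inl b => exact pred_eq_self hx
  | inr u => rw [hd_eq_none hx] at h; exact absurd h (by simp)

def seqFn (d : Delay A) (n : ℕ) : Option A := hd (pred^[n] d)

lemma seqFn_mono (d : Delay A) (n : ℕ) :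
    seqFn d n = seqFn d (n + 1) ∨ (seqFn d n = none ∧ seqFn d (n + 1) ≠ none) := by
  have h1 : seqFn d (n+1) = hd (pred (pred^[n] d)) := by
    simp only [seqFn, Function.iterate_succ_apply']
  set x := pred^[n] d with hx
  rcases h : hd x with _ | a
  · rcases h2 : hd (pred x) with _ | b
    · left; rw [seqFn, ← hx, h, h1, h2]
    · right
      constructor
      · rw [seqFn, ← hx, h]
      · rw [h1, h2]; simp
  · left
    rw [seqFn, ← hx, h, h1, pred_of_hd_some h, h]

lemma hd_toDelay (g : ℕ → Option A) : hd (toDelay g) = g 0 := by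
  rcases h : g 0 with _ | a
  · rw [hd_eq_none (dest_toDelay_none h)]
  · rw [hd_eq_some (dest_toDelay_some h)]

lemma some_stable {g : ℕ → Option A}
    (hm : ∀ n : ℕ, g n = g (n + 1) ∨ (g n = none ∧ g (n + 1) ≠ none))
    {a : A} (h : g 0 = some a) : ∀ n, g n = some a := by
  intro n
  induction n with
  | zero => exact h
  | succ k ih =>
    rcases hm k with h1 | ⟨h1, _⟩
    · rw [← h1]; exact ih
    · rw [ih] at h1; exact absurd h1 (by simp)

lemma shift_mono {g : ℕ → Option A}
    (hm : ∀ n : ℕ, g n = g (n + 1) ∨ (g n = none ∧ g (n + 1) ≠ none)) :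
    ∀ n : ℕ, g (n + 1) = g (n + 1 + 1) ∨ (g (n + 1) = none ∧ g (n + 1 + 1) ≠ none) :=
  fun n => hm (n + 1)

lemma seqFn_toDelay (n : ℕ) : ∀ (g : ℕ → Option A),
    (∀ k : ℕ, g k = g (k + 1) ∨ (g k = none ∧ g (k + 1) ≠ none)) →
    seqFn (toDelay g) n = g n := by
  induction n with
  | zero => intro g _; exact hd_toDelay g
  | succ k ih =>
    intro g hm
    have h1 : seqFn (toDelay g) (k+1) = seqFn (pred (toDelay g)) k := by
      simp only [seqFn, Function.iterate_succ_apply]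
    rcases h : g 0 with _ | a
    · rw [h1, pred_eq_child (dest_toDelay_none h), ih _ (shift_mono hm)]
    · rw [h1, pred_eq_self (dest_toDelay_some h)]
      rw [ih _ hm, some_stable hm h k, some_stable hm h (k+1)]

lemma shift_seqFn (d : Delay A) : (fun n => seqFn d (n + 1)) = seqFn (pred d) := by
  funext n
  simp only [seqFn, Function.iterate_succ_apply]

lemma toDelay_seqFn (d : Delay A) : toDelay (seqFn d) = d := by
  apply PFunctor.M.bisim (fun x y => x = toDelay (seqFn y))
  · intro x y h
    subst h
    rcases hx : PFunctor.M.dest y with ⟨s, f⟩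
    cases s with
    | inl a =>
      have h0 : seqFn y 0 = some a := hd_eq_some hx
      refine ⟨Sum.inl a, fun e => PEmpty.elim e, f, ?_, ?_, ?_⟩
      · exact dest_toDelay_some h0
      · rfl
      · exact fun i => i.elim
    | inr u =>
      have h0 : seqFn y 0 = none := hd_eq_none hx
      cases u
      refine ⟨Sum.inr PUnit.unit, fun _ => toDelay (fun n => seqFn y (n + 1)), f, ?_, ?_, ?_⟩
      · exact dest_toDelay_none h0
      · rfl
      · intro i
        have hi : i = PUnit.unit := rfl
        simp only [hi]
        have := shift_seqFn (A := A) y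
        rw [pred_eq_child hx] at this
        exact congrArg toDelay this
  · rfl
end MonSeqDelay

/-- **The monotone sequences over `A` are in bijection with the delay type `D A`.** -/
theorem monSeq_equiv_delay (A : Type u) : Nonempty (MonSeq A ≃ Delay A) := by
  refine ⟨⟨fun g => MonSeqDelay.toDelay g.1,
    fun d => ⟨MonSeqDelay.seqFn d, MonSeqDelay.seqFn_mono d⟩, ?_, ?_⟩⟩
  · intro g
    apply Subtype.ext
    funext n
    exact MonSeqDelay.seqFn_toDelay n g.1 g.2
  · intro d
    exact MonSeqDelay.toDelay_seqFn d
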